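/- Let γ : ℝ → ℝ² be differentiable on all of ℝ, and suppose that for every t ∈ ℝ one has γ(t)₂² − γ(t)₁² = 1 (the curve lies on the vertical unit hyperbola) and γ'(t)₁² − γ'(t)₂² = 1 (the curve is well-parametrized and timelike). Then exactly one of the following holds: for all t ∈ ℝ, γ'(t)₁ = γ(t)₂ and γ'(t)₂ = γ(t)₁; or for all t ∈ ℝ, γ'(t)₁ = −γ(t)₂ and γ'(t)₂ = −γ(t)₁. In particular, in the first case the function e(t) := γ(t)₁ + γ(t)₂ satisfies e'(t) = e(t) for all t, and in the second case the function e(t) := γ(−t)₁ + γ(−t)₂ satisfies e'(t) = e(t) for all t. -/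

import Mathlib

/-- Dichotomy for well-parametrized timelike curves on the unit hyperbola:
the derivative is everywhere the coordinate swap of the curve, or everywhere
its negative; and in either case an exponential function arises. -/
theorem hyperbola_wellParam_dichotomy (γ γ' : ℝ → ℝ × ℝ)
    (hγ : ∀ t : ℝ, HasDerivAt γ (γ' t) t)
    (hhyp : ∀ t : ℝ, (γ t).2 ^ 2 - (γ t).1 ^ 2 = 1)
    (hwp : ∀ t : ℝ, (γ' t).1 ^ 2 - (γ' t).2 ^ 2 = 1) :
    Xor' (∀ t : ℝ, (γ' t).1 = (γ t).2 ∧ (γ' t).2 = (γ t).1)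
         (∀ t : ℝ, (γ' t).1 = -(γ t).2 ∧ (γ' t).2 = -(γ t).1) ∧
    ((∀ t : ℝ, (γ' t).1 = (γ t).2 ∧ (γ' t).2 = (γ t).1) →
      ∀ t : ℝ, HasDerivAt (fun s => (γ s).1 + (γ s).2) ((γ t).1 + (γ t).2) t) ∧
    ((∀ t : ℝ, (γ' t).1 = -(γ t).2 ∧ (γ' t).2 = -(γ t).1) →
      ∀ t : ℝ, HasDerivAt (fun s => (γ (-s)).1 + (γ (-s)).2) ((γ (-t)).1 + (γ (-t)).2) t) := by
  -- component derivatives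
  have hfst : ∀ t : ℝ, HasDerivAt (fun s => (γ s).1) ((γ' t).1) t := fun t =>
    (ContinuousLinearMap.fst ℝ ℝ ℝ).hasFDerivAt.comp_hasDerivAt t (hγ t)
  have hsnd : ∀ t : ℝ, HasDerivAt (fun s => (γ s).2) ((γ' t).2) t := fun t =>
    (ContinuousLinearMap.snd ℝ ℝ ℝ).hasFDerivAt.comp_hasDerivAt t (hγ t)
  -- differentiate the hyperbola constraint
  have hrel : ∀ t : ℝ, (γ t).2 * (γ' t).2 = (γ t).1 * (γ' t).1 := by
    intro t
    have h1 : HasDerivAt (fun s => (γ s).2 ^ 2 - (γ s).1 ^ 2)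
        (2 * (γ t).2 * (γ' t).2 - 2 * (γ t).1 * (γ' t).1) t := by
      have := (((hsnd t).fun_pow 2).fun_sub ((hfst t).fun_pow 2))
      refine this.congr_deriv ?_
      push_cast
      ring
    have h2 : HasDerivAt (fun s => (γ s).2 ^ 2 - (γ s).1 ^ 2) 0 t := by
      have he : (fun s => (γ s).2 ^ 2 - (γ s).1 ^ 2) = fun _ => (1 : ℝ) := funext hhyp
      rw [he]; exact hasDerivAt_const t 1
    have := h1.unique h2
    linarith
  -- γ₂ never vanishes
  have hb2 : ∀ t : ℝ, (γ t).2 ≠ 0 := by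
    intro t h
    have := hhyp t
    rw [h] at this
    nlinarith [sq_nonneg (γ t).1]
  -- γ₁' never vanishes
  have ha' : ∀ t : ℝ, (γ' t).1 ≠ 0 := by
    intro t h
    have := hwp t
    rw [h] at this
    nlinarith [sq_nonneg (γ' t).2]
  -- pointwise dichotomy
  have hpt : ∀ t : ℝ, ((γ' t).1 = (γ t).2 ∧ (γ' t).2 = (γ t).1) ∨
      ((γ' t).1 = -(γ t).2 ∧ (γ' t).2 = -(γ t).1) := by
    intro t
    have h1 := hhyp t
    have h2 := hwp t
    have h3 := hrel t
    have hb := hb2 t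
    have h4 : ((γ t).2 * (γ' t).2) ^ 2 = ((γ t).1 * (γ' t).1) ^ 2 := by rw [h3]
    have hb' : (γ' t).2 ^ 2 = (γ t).1 ^ 2 := by nlinarith [h4, h1, h2]
    have hsq : (γ' t).1 ^ 2 = (γ t).2 ^ 2 := by nlinarith [hb', h1, h2]
    have : ((γ' t).1 - (γ t).2) * ((γ' t).1 + (γ t).2) = 0 := by nlinarith
    rcases mul_eq_zero.1 this with h | h
    · left
      have ha : (γ' t).1 = (γ t).2 := by linarith
      refine ⟨ha, ?_⟩
      have : (γ t).2 * ((γ' t).2 - (γ t).1) = 0 := by rw [ha] at h3; nlinarith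
      rcases mul_eq_zero.1 this with h' | h'
      · exact absurd h' hb
      · linarith
    · right
      have ha : (γ' t).1 = -(γ t).2 := by linarith
      refine ⟨ha, ?_⟩
      have : (γ t).2 * ((γ' t).2 + (γ t).1) = 0 := by rw [ha] at h3; nlinarith
      rcases mul_eq_zero.1 this with h' | h'
      · exact absurd h' hb
      · linarith
  -- sign of γ₁' is constant (Darboux)
  have hsgnA : (∀ t : ℝ, (γ' t).1 < 0) ∨ (∀ t : ℝ, 0 < (γ' t).1) := by
    have := hasDerivWithinAt_forall_lt_or_forall_gt_of_forall_ne (f := fun s => (γ s).1)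
      (f' := fun s => (γ' s).1) (s := Set.univ) convex_univ
      (fun x _ => (hfst x).hasDerivWithinAt) (m := 0) (fun x _ => ha' x)
    rcases this with h | h
    · exact Or.inl fun t => h t (Set.mem_univ t)
    · exact Or.inr fun t => h t (Set.mem_univ t)
  -- sign of γ₂ is constant (IVT)
  have hcont : Continuous fun s => (γ s).2 := by
    have : Differentiable ℝ fun s => (γ s).2 := fun t => (hsnd t).differentiableAt
    exact this.continuous
  have hsgnB : (∀ t : ℝ, (γ t).2 < 0) ∨ (∀ t : ℝ, 0 < (γ t).2) := by
    by_contra h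
    push_neg at h
    obtain ⟨⟨a, ha⟩, ⟨b, hb⟩⟩ := h
    have ha' : 0 < (γ a).2 := lt_of_le_of_ne ha (Ne.symm (hb2 a))
    have hb' : (γ b).2 < 0 := lt_of_le_of_ne hb (hb2 b)
    have : (0 : ℝ) ∈ Set.uIcc ((γ a).2) ((γ b).2) :=
      Set.mem_uIcc.2 (Or.inr ⟨le_of_lt hb', le_of_lt ha'⟩)
    have hsub := intermediate_value_uIcc (hcont.continuousOn (s := Set.uIcc a b))
    obtain ⟨c, _, hc⟩ := hsub this
    exact hb2 c hc
  -- uniform dichotomy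
  have hmain : (∀ t : ℝ, (γ' t).1 = (γ t).2 ∧ (γ' t).2 = (γ t).1) ∨
      (∀ t : ℝ, (γ' t).1 = -(γ t).2 ∧ (γ' t).2 = -(γ t).1) := by
    rcases hsgnA with hA | hA <;> rcases hsgnB with hB | hB
    · -- γ₁' < 0, γ₂ < 0 : case plus
      left; intro t
      rcases hpt t with h | h
      · exact h
      · exfalso; have h1 := hA t; have h2 := hB t; rw [h.1] at h1; linarith
    · -- γ₁' < 0, γ₂ > 0 : case minus
      right; intro t
      rcases hpt t with h | h
      · exfalso; have h1 := hA t; have h2 := hB t; rw [h.1] at h1; linarith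
      · exact h
    · -- γ₁' > 0, γ₂ < 0 : case minus
      right; intro t
      rcases hpt t with h | h
      · exfalso; have h1 := hA t; have h2 := hB t; rw [h.1] at h1; linarith
      · exact h
    · left; intro t
      rcases hpt t with h | h
      · exact h
      · exfalso; have h1 := hA t; have h2 := hB t; rw [h.1] at h1; linarith
  have hnotboth : ¬((∀ t : ℝ, (γ' t).1 = (γ t).2 ∧ (γ' t).2 = (γ t).1) ∧
      (∀ t : ℝ, (γ' t).1 = -(γ t).2 ∧ (γ' t).2 = -(γ t).1)) := by
    rintro ⟨h1, h2⟩
    have := (h1 0).1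
    have := (h2 0).1
    have : (γ 0).2 = 0 := by linarith
    exact hb2 0 this
  refine ⟨?_, ?_, ?_⟩
  · rcases hmain with h | h
    · exact Or.inl ⟨h, fun h' => hnotboth ⟨h, h'⟩⟩
    · exact Or.inr ⟨h, fun h' => hnotboth ⟨h', h⟩⟩
  · intro h t
    have := (hfst t).add (hsnd t)
    rwa [(h t).1, (h t).2, add_comm ((γ t).2)] at this
  · intro h t
    have hin : HasDerivAt (fun s => (γ s).1 + (γ s).2) (-((γ (-t)).1 + (γ (-t)).2)) (-t) := by
      have := (hfst (-t)).add (hsnd (-t))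
      rwa [(h (-t)).1, (h (-t)).2, show -(γ (-t)).2 + -(γ (-t)).1 = -((γ (-t)).1 + (γ (-t)).2) by ring] at this
    have hneg : HasDerivAt (fun s : ℝ => -s) (-1 : ℝ) t := hasDerivAt_neg t
    have := hin.comp t hneg
    simpa [Function.comp_def] using this
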